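/- Let G be a group and L a language of words over A ∪ A⁻¹ mapping onto G via μ. A subgroup H of G is L-quasi-convex (every L-representative of an element of H stays within distance δ of H in the Cayley graph, for some δ) if and only if the Stallings graph of H with respect to L — the subgraph of the Schreier graph Schreier(G,H) spanned by loops at the base vertex H labeled by words of L ∩ μ⁻¹(H) — has finitely many vertices. -/
import Mathlib


variable {A : Type} [Finite A] [DecidableEq A] {G : Type} [Group G]

/-- Word length of `g ∈ G` with respect to the generating map `μ`. -/
noncomputable def wordLen (μ : FreeGroup A →* G) (g : G) : ℕ :=
  sInf {n | ∃ l : List (A × Bool), l.length = n ∧ μ (FreeGroup.mk l) = g}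

/-- Word metric on `G`. -/
noncomputable def wordDist (μ : FreeGroup A →* G) (g h : G) : ℕ :=
  wordLen μ (g⁻¹ * h)

/-- `H` is `L`-quasi-convex: some `δ` bounds the distance to `H` of every
prefix of every `L`-representative of an element of `H`. -/
def LQuasiConvex (μ : FreeGroup A →* G) (L : Set (FreeGroup A)) (H : Subgroup G) : Prop :=
  ∃ δ : ℕ, ∀ w ∈ L, (μ w ∈ H) → ∀ i : ℕ,
    ∃ h ∈ H, wordDist μ (μ (FreeGroup.mk (w.toWord.take i))) h ≤ δ

/-- Vertex set of the Stallings graph of `H` w.r.t. `L`: the right cosets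
`H·μ(u)` over all prefixes `u` of words in `L ∩ μ⁻¹(H)`. -/
def stallingsVertices (μ : FreeGroup A →* G) (L : Set (FreeGroup A))
    (H : Subgroup G) : Set (Set G) :=
  {s | ∃ w ∈ L, μ w ∈ H ∧ ∃ i : ℕ,
    s = (fun h => h * μ (FreeGroup.mk (w.toWord.take i))) '' (H : Set G)}

lemma wordLen_spec (μ : FreeGroup A →* G) (hμ : Function.Surjective μ) (g : G) :
    ∃ l : List (A × Bool), l.length = wordLen μ g ∧ μ (FreeGroup.mk l) = g := by
  have hne : {n | ∃ l : List (A × Bool), l.length = n ∧ μ (FreeGroup.mk l) = g}.Nonempty := by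
    obtain ⟨w, hw⟩ := hμ g
    exact ⟨w.toWord.length, w.toWord, rfl, by rw [FreeGroup.mk_toWord]; exact hw⟩
  have := Nat.sInf_mem hne
  obtain ⟨l, hl, hlg⟩ := this
  exact ⟨l, hl, hlg⟩

lemma coset_eq_of_mem {H : Subgroup G} {h : G} (hh : h ∈ H) (c : G) :
    (fun x => x * (h * c)) '' (H : Set G) = (fun x => x * c) '' (H : Set G) := by
  ext x
  constructor
  · rintro ⟨y, hy, rfl⟩
    exact ⟨y * h, H.mul_mem hy hh, by simp [mul_assoc]⟩
  · rintro ⟨y, hy, rfl⟩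
    exact ⟨y * h⁻¹, H.mul_mem hy (H.inv_mem hh), by simp [mul_assoc]⟩

/-- `H` is `L`-quasi-convex iff its Stallings graph with respect to `L` has
finitely many vertices. -/
theorem stmt12 (μ : FreeGroup A →* G) (hμ : Function.Surjective μ)
    (L : Set (FreeGroup A)) (hL : μ '' L = Set.univ) (H : Subgroup G) :
    LQuasiConvex μ L H ↔ (stallingsVertices μ L H).Finite := by
  constructor
  · rintro ⟨δ, hδ⟩
    have hfin : ({l : List (A × Bool) | l.length ≤ δ}).Finite := List.finite_length_le _ _
    apply Set.Finite.subset ((hfin.image (fun l => μ (FreeGroup.mk l))).image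
      (fun c => (fun x => x * c⁻¹) '' (H : Set G)))
    rintro s ⟨w, hwL, hwH, i, rfl⟩
    obtain ⟨h, hh, hdist⟩ := hδ w hwL hwH i
    set u := μ (FreeGroup.mk (w.toWord.take i)) with hu
    -- wordDist u h ≤ δ : exists l with length ≤ δ, μ (mk l) = u⁻¹ * h
    have hne : {n | ∃ l : List (A × Bool), l.length = n ∧ μ (FreeGroup.mk l) = u⁻¹ * h}.Nonempty := by
      obtain ⟨v, hv⟩ := hμ (u⁻¹ * h)
      exact ⟨v.toWord.length, v.toWord, rfl, by rw [FreeGroup.mk_toWord]; exact hv⟩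
    obtain ⟨l, hllen, hlv⟩ := Nat.sInf_mem hne
    have hlδ : l.length ≤ δ := by
      rw [hllen]; exact hdist
    refine ⟨μ (FreeGroup.mk l), ⟨l, hlδ, rfl⟩, ?_⟩
    -- u = h * (μ (mk l))⁻¹
    have : u = h * (μ (FreeGroup.mk l))⁻¹ := by
      rw [hlv]; group
    rw [this]
    exact (coset_eq_of_mem hh _).symm
  · rintro hfin
    -- choose for each coset a representative
    have hrep : ∀ s ∈ stallingsVertices μ L H, ∃ g : G, g ∈ s := by
      rintro s ⟨w, hwL, hwH, i, rfl⟩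
      exact ⟨1 * μ (FreeGroup.mk (w.toWord.take i)), 1, H.one_mem, rfl⟩
    classical
    choose gs hgs using hrep
    -- δ = max over finite set of wordLen μ (gs s)⁻¹
    obtain ⟨δ, hδ⟩ : ∃ δ : ℕ, ∀ s (hs : s ∈ stallingsVertices μ L H),
        wordLen μ (gs s hs)⁻¹ ≤ δ := by
      have : (stallingsVertices μ L H).Finite := hfin
      obtain ⟨F, hF⟩ := Set.Finite.exists_finset_coe this
      refine ⟨F.sup (fun s => if hs : s ∈ stallingsVertices μ L H then wordLen μ (gs s hs)⁻¹ else 0), ?_⟩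
      intro s hs
      have hsF : s ∈ F := by rw [← Finset.mem_coe, hF]; exact hs
      have := Finset.le_sup (f := fun s => if hs : s ∈ stallingsVertices μ L H then wordLen μ (gs s hs)⁻¹ else 0) hsF
      simpa [dif_pos hs] using this
    refine ⟨δ, fun w hwL hwH i => ?_⟩
    set u := μ (FreeGroup.mk (w.toWord.take i)) with hu
    have hs : (fun h => h * u) '' (H : Set G) ∈ stallingsVertices μ L H :=
      ⟨w, hwL, hwH, i, rfl⟩
    obtain ⟨h₀, hh₀, hg⟩ := hgs _ hs
    -- u⁻¹ * h₀⁻¹ = (h₀ * u)⁻¹ = gs⁻¹. 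
    refine ⟨h₀⁻¹, H.inv_mem hh₀, ?_⟩
    have : u⁻¹ * h₀⁻¹ = (gs _ hs)⁻¹ := by rw [← hg]; group
    unfold wordDist
    rw [this]
    exact hδ _ hs
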